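/- Let (X, 𝒜, μ) be a probability space, let g ∈ L¹(X, μ), and let P : L¹(X, μ) → L¹(X, μ) be a continuous linear operator such that for every density f ∈ L¹(X, μ) the sequence (Pᵐf)_{m∈ℕ} converges to 0 in L¹(X, μ). Then the equation φ = Pφ + g has a solution φ ∈ L¹(X, μ) if and only if the series ∑_{m=0}^∞ Pᵐg converges in L¹(X, μ); moreover, every solution φ ∈ L¹(X, μ) of φ = Pφ + g equals ∑_{m=0}^∞ Pᵐg (μ-a.e.), so the solution is unique when it exists. -/

import Mathlib

open MeasureTheory Filter Topology

/-- Let `(X, 𝒜, μ)` be a probability space, `g ∈ L¹(X, μ)`, and let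
`P : L¹ → L¹` be a continuous linear operator such that for every density `f`
(i.e. `f ≥ 0` and `∫ f dμ = 1`) the iterates `Pᵐ f` converge to `0` in `L¹`. Then
`φ = P φ + g` has a solution in `L¹` iff the series `∑ₘ Pᵐ g` converges in `L¹`;
moreover every solution `φ` equals `∑ₘ Pᵐ g`, so the solution is unique when it exists. -/
theorem stmt12 {X : Type*} [MeasurableSpace X] (μ : Measure X) [IsProbabilityMeasure μ]
    (g : Lp ℝ 1 μ) (P : Lp ℝ 1 μ →L[ℝ] Lp ℝ 1 μ)
    (hPm : ∀ f : Lp ℝ 1 μ, 0 ≤ f → ∫ x, f x ∂μ = 1 →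
      Tendsto (fun m : ℕ => (P ^ m) f) atTop (𝓝 0)) :
    ((∃ φ : Lp ℝ 1 μ, φ = P φ + g) ↔
      ∃ s : Lp ℝ 1 μ,
        Tendsto (fun M : ℕ => ∑ m ∈ Finset.range M, (P ^ m) g) atTop (𝓝 s)) ∧
    (∀ φ : Lp ℝ 1 μ, φ = P φ + g →
      Tendsto (fun M : ℕ => ∑ m ∈ Finset.range M, (P ^ m) g) atTop (𝓝 φ)) := by
  -- Step 1: `Pᵐ f → 0` for every `f ∈ L¹`.
  have keyNN : ∀ f : Lp ℝ 1 μ, 0 ≤ f →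
      Tendsto (fun m : ℕ => (P ^ m) f) atTop (𝓝 0) := by
    intro f hf
    have hf' : 0 ≤ᵐ[μ] (f : X → ℝ) := (Lp.coeFn_nonneg f).mpr hf
    set c := ∫ x, f x ∂μ with hc
    rcases eq_or_lt_of_le (integral_nonneg_of_ae hf') with h0 | hpos
    · have hfz : f = 0 := by
        have hz : (f : X → ℝ) =ᵐ[μ] 0 :=
          (integral_eq_zero_iff_of_nonneg_ae hf' (L1.integrable_coeFn f)).mp h0.symm
        ext1
        exact hz.trans (Lp.coeFn_zero ℝ 1 μ).symm
      have hz2 : ∀ m : ℕ, (P ^ m) f = 0 := fun m => by rw [hfz, map_zero]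
      simp only [hz2]
      exact tendsto_const_nhds
    · have hd0 : 0 ≤ c⁻¹ • f := by
        rw [← Lp.coeFn_nonneg]
        filter_upwards [Lp.coeFn_smul c⁻¹ f, hf'] with x hx hx2
        rw [hx, Pi.smul_apply, smul_eq_mul]
        exact mul_nonneg (inv_nonneg.mpr hpos.le) hx2
      have hdint : ∫ x, (c⁻¹ • f) x ∂μ = 1 := by
        rw [integral_congr_ae (Lp.coeFn_smul c⁻¹ f)]
        simp only [Pi.smul_apply, smul_eq_mul]
        rw [integral_const_mul]
        field_simp
        rw [← hc]; exact div_self hpos.ne'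
      have h := (hPm _ hd0 hdint).const_smul c
      have heq : ∀ m : ℕ, c • (P ^ m) (c⁻¹ • f) = (P ^ m) f := by
        intro m
        rw [_root_.map_smul, smul_smul, mul_inv_cancel₀ hpos.ne', one_smul]
      rw [smul_zero] at h
      exact h.congr heq
  have key : ∀ f : Lp ℝ 1 μ, Tendsto (fun m : ℕ => (P ^ m) f) atTop (𝓝 0) := by
    intro f
    have h := (keyNN _ (posPart_nonneg f)).sub (keyNN _ (negPart_nonneg f))
    have heq : ∀ m : ℕ, (P ^ m) f⁺ - (P ^ m) f⁻ = (P ^ m) f := by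
      intro m
      rw [← map_sub, posPart_sub_negPart]
    rw [sub_zero] at h
    exact h.congr heq
  -- Step 2: for a solution φ, partial sums equal φ - Pᴹ φ.
  have hsum : ∀ φ : Lp ℝ 1 μ, φ = P φ + g → ∀ M : ℕ,
      ∑ m ∈ Finset.range M, (P ^ m) g = φ - (P ^ M) φ := by
    intro φ hφ M
    induction M with
    | zero => simp
    | succ M ih =>
      have hPMg : (P ^ M) g = (P ^ M) φ - (P ^ (M + 1)) φ := by
        have h1 : (P ^ M) φ = (P ^ M) (P φ) + (P ^ M) g := by
          conv_lhs => rw [hφ]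
          rw [map_add]
        have h2 : (P ^ M) (P φ) = (P ^ (M + 1)) φ := by
          rw [pow_succ, ContinuousLinearMap.mul_apply]
        rw [h2] at h1
        rw [h1]; abel
      rw [Finset.sum_range_succ, ih, hPMg]; abel
  have huniq : ∀ φ : Lp ℝ 1 μ, φ = P φ + g →
      Tendsto (fun M : ℕ => ∑ m ∈ Finset.range M, (P ^ m) g) atTop (𝓝 φ) := by
    intro φ hφ
    have h := (tendsto_const_nhds : Tendsto (fun _ : ℕ => φ) atTop (𝓝 φ)).sub (key φ)
    simp only [sub_zero] at h
    exact h.congr fun M => (hsum φ hφ M).symm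
  refine ⟨⟨fun ⟨φ, hφ⟩ => ⟨φ, huniq φ hφ⟩, ?_⟩, huniq⟩
  rintro ⟨s, hs⟩
  have h1 : Tendsto (fun M : ℕ => P (∑ m ∈ Finset.range M, (P ^ m) g)) atTop (𝓝 (P s)) :=
    (P.continuous.tendsto s).comp hs
  have h2 : ∀ M : ℕ, P (∑ m ∈ Finset.range M, (P ^ m) g)
      = (∑ m ∈ Finset.range (M + 1), (P ^ m) g) - g := by
    intro M
    have hterm : ∀ x : ℕ, P ((P ^ x) g) = (P ^ (x + 1)) g := fun x => by
      rw [pow_succ', ContinuousLinearMap.mul_apply]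
    rw [map_sum, Finset.sum_range_succ']
    simp only [hterm]; simp
  have h3 : Tendsto (fun M : ℕ => (∑ m ∈ Finset.range (M + 1), (P ^ m) g) - g) atTop
      (𝓝 (s - g)) := (hs.comp (tendsto_add_atTop_nat 1)).sub tendsto_const_nhds
  have hPs : P s = s - g := tendsto_nhds_unique (h1.congr h2) h3
  exact ⟨s, by rw [hPs]; abel⟩
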